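/- The algebra Ξ freely generated over ℤ by elements e_s, x_s (s ∈ S, S finite) subject to the relations e_s² = e_s, e_s e_t = e_t e_s, e_s x_s = x_s, x_s e_s = 0, is isomorphic to the path algebra ℤQ of the quiver Q whose vertices are the subsets of S and which has exactly |I∖J| edges from J to I for each pair of subsets I, J ⊆ S. -/

import Mathlib

open FreeAlgebra

/-- The defining relations of Gyoja's algebra Ξ: for each s ∈ S a generator e_s
(encoded `Sum.inl s`) and a generator x_s (encoded `Sum.inr s`), subject to
e_s² = e_s, e_s e_t = e_t e_s, e_s x_s = x_s, x_s e_s = 0. -/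
inductive XiRel (S : Type) [Fintype S] [DecidableEq S] :
    FreeAlgebra ℤ (S ⊕ S) → FreeAlgebra ℤ (S ⊕ S) → Prop
  | idem (s : S) : XiRel S (ι ℤ (Sum.inl s) * ι ℤ (Sum.inl s)) (ι ℤ (Sum.inl s))
  | comm (s t : S) : XiRel S (ι ℤ (Sum.inl s) * ι ℤ (Sum.inl t))
      (ι ℤ (Sum.inl t) * ι ℤ (Sum.inl s))
  | ex (s : S) : XiRel S (ι ℤ (Sum.inl s) * ι ℤ (Sum.inr s)) (ι ℤ (Sum.inr s))
  | xe (s : S) : XiRel S (ι ℤ (Sum.inr s) * ι ℤ (Sum.inl s)) 0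

/-- Gyoja's algebra Ξ: the ℤ-algebra freely generated by e_s, x_s (s ∈ S) subject to
e_s² = e_s, e_s e_t = e_t e_s, e_s x_s = x_s, x_s e_s = 0. -/
abbrev Xi (S : Type) [Fintype S] [DecidableEq S] := RingQuot (XiRel S)

/-- The edges of the quiver Q: for each pair of vertices I, J ⊆ S there are exactly
|I∖J| edges from J to I, indexed by the elements of I∖J. -/
abbrev QEdge (S : Type) [Fintype S] [DecidableEq S] :=
  Σ I : Finset S, Σ J : Finset S, {s : S // s ∈ I \ J}

/-- The defining relations of the path algebra ℤQ of the quiver Q whose vertices are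
the subsets of S: the vertex idempotents are orthogonal and sum to 1, and each edge
element ê (from J to I) satisfies E_I · ê · E_J = ê. -/
inductive PathRel (S : Type) [Fintype S] [DecidableEq S] :
    FreeAlgebra ℤ (Finset S ⊕ QEdge S) → FreeAlgebra ℤ (Finset S ⊕ QEdge S) → Prop
  | vtx (I J : Finset S) : PathRel S (ι ℤ (Sum.inl I) * ι ℤ (Sum.inl J))
      (if I = J then ι ℤ (Sum.inl I) else 0)
  | sum : PathRel S (∑ I : Finset S, ι ℤ (Sum.inl I)) 1
  | edge (a : QEdge S) :
      PathRel S (ι ℤ (Sum.inl a.1) * ι ℤ (Sum.inr a) * ι ℤ (Sum.inl a.2.1))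
        (ι ℤ (Sum.inr a))

/-- The path algebra ℤQ over the quiver Q with vertex set the power set of S and
exactly |I∖J| edges from J to I for each pair of vertices I, J ⊆ S. -/
abbrev PathAlg (S : Type) [Fintype S] [DecidableEq S] := RingQuot (PathRel S)

namespace XiPath

variable (S : Type) [Fintype S] [DecidableEq S]

noncomputable def eX (s : S) : Xi S := RingQuot.mkAlgHom ℤ (XiRel S) (ι ℤ (Sum.inl s))
noncomputable def xX (s : S) : Xi S := RingQuot.mkAlgHom ℤ (XiRel S) (ι ℤ (Sum.inr s))

variable {S}

lemma e_idem (s : S) : eX S s * eX S s = eX S s := by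
  simpa [eX, map_mul] using RingQuot.mkAlgHom_rel ℤ (XiRel.idem s)

lemma e_comm (s t : S) : eX S s * eX S t = eX S t * eX S s := by
  simpa [eX, map_mul] using RingQuot.mkAlgHom_rel ℤ (XiRel.comm s t)

lemma e_x (s : S) : eX S s * xX S s = xX S s := by
  simpa [eX, xX, map_mul] using RingQuot.mkAlgHom_rel ℤ (XiRel.ex s)

lemma x_e (s : S) : xX S s * eX S s = 0 := by
  simpa [eX, xX, map_mul] using RingQuot.mkAlgHom_rel ℤ (XiRel.xe s)

variable (S)

noncomputable def Csub : Subalgebra ℤ (Xi S) := Algebra.adjoin ℤ (Set.range (eX S))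

noncomputable instance : CommRing (Csub S) :=
  { (inferInstance : Ring (Csub S)) with
    mul_comm := (Algebra.adjoinCommRingOfComm ℤ (by
    rintro a ⟨s, rfl⟩ b ⟨t, rfl⟩
    exact e_comm s t)).mul_comm }

noncomputable def ee (s : S) : Csub S := ⟨eX S s, Algebra.subset_adjoin ⟨s, rfl⟩⟩

variable {S}

lemma ee_idem (s : S) : ee S s * ee S s = ee S s := Subtype.ext (e_idem s)

lemma ee_cancel (s : S) : ee S s * (1 - ee S s) = 0 := by
  rw [mul_sub, mul_one, ee_idem, sub_self]

variable (S)

noncomputable def FF (I : Finset S) : Csub S :=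
  (∏ t ∈ I, ee S t) * ∏ t ∈ Iᶜ, (1 - ee S t)

variable {S}

lemma FF_sum : ∑ I : Finset S, FF S I = 1 := by
  have h := Finset.prod_add (fun t : S => ee S t) (fun t => 1 - ee S t) (Finset.univ : Finset S)
  simp only [add_sub_cancel, Finset.prod_const_one, Finset.powerset_univ,
    ← Finset.compl_eq_univ_sdiff] at h
  exact h.symm


lemma FF_orth_aux {I J : Finset S} {t : S} (ht : t ∈ I) (ht' : t ∉ J) :
    FF S I * FF S J = 0 := by
  have h1 : ee S t ∣ FF S I := (Finset.dvd_prod_of_mem _ ht).mul_right _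
  have h2 : (1 - ee S t) ∣ FF S J :=
    (Finset.dvd_prod_of_mem _ (Finset.mem_compl.mpr ht')).mul_left _
  have h3 : ee S t * (1 - ee S t) ∣ FF S I * FF S J := mul_dvd_mul h1 h2
  rw [ee_cancel] at h3
  exact zero_dvd_iff.mp h3

lemma FF_orth {I J : Finset S} (h : I ≠ J) : FF S I * FF S J = 0 := by
  have hex : ∃ t, (t ∈ I ∧ t ∉ J) ∨ (t ∈ J ∧ t ∉ I) := by
    by_contra hc
    push_neg at hc
    exact h (Finset.ext fun t => ⟨fun ht => (hc t).1 ht, fun ht => (hc t).2 ht⟩)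
  obtain ⟨t, ⟨h1, h2⟩ | ⟨h1, h2⟩⟩ := hex
  · exact FF_orth_aux h1 h2
  · rw [mul_comm]; exact FF_orth_aux h1 h2

lemma e_mul_FF (s : S) (I : Finset S) :
    ee S s * FF S I = if s ∈ I then FF S I else 0 := by
  split_ifs with h
  · unfold FF
    rw [← mul_assoc, ← Finset.mul_prod_erase _ _ h, ← mul_assoc, ee_idem,
      Finset.mul_prod_erase _ _ h]
  · obtain ⟨c, hc⟩ : (1 - ee S s) ∣ FF S I :=
      (Finset.dvd_prod_of_mem _ (Finset.mem_compl.mpr h)).mul_left _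
    rw [hc, ← mul_assoc, ee_cancel, zero_mul]


lemma FF_mul_FF (I J : Finset S) : FF S I * FF S J = if I = J then FF S I else 0 := by
  rcases eq_or_ne I J with rfl | h
  · rw [if_pos rfl]
    have h1 : FF S I * (∑ J : Finset S, FF S J) = FF S I := by rw [FF_sum, mul_one]
    rw [Finset.mul_sum, Finset.sum_eq_single_of_mem I (Finset.mem_univ I)
      (fun b _ hb => FF_orth (fun hh => hb hh.symm))] at h1
    exact h1
  · rw [if_neg h]; exact FF_orth h

lemma e_eq_sum (s : S) : ∑ I : Finset S, (if s ∈ I then FF S I else 0) = ee S s := by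
  have : ∀ I : Finset S, (if s ∈ I then FF S I else 0) = ee S s * FF S I :=
    fun I => (e_mul_FF s I).symm
  rw [Finset.sum_congr rfl (fun I _ => this I), ← Finset.mul_sum, FF_sum, mul_one]

-- transfer to Xi
variable (S)

noncomputable def F (I : Finset S) : Xi S := (FF S I : Xi S)

variable {S}

lemma coe_mul' (a b : Csub S) : ((a * b : Csub S) : Xi S) = (a : Xi S) * b := rfl

lemma coe_one' : ((1 : Csub S) : Xi S) = 1 := rfl

lemma coe_sum' {α : Type*} (s : Finset α) (f : α → Csub S) :
    ((∑ i ∈ s, f i : Csub S) : Xi S) = ∑ i ∈ s, (f i : Xi S) := by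
  classical
  induction s using Finset.induction_on with
  | empty => simp
  | @insert _ _ h ih => rw [Finset.sum_insert h, Finset.sum_insert h, ← ih]; rfl

lemma F_mul_F (I J : Finset S) : F S I * F S J = if I = J then F S I else 0 := by
  have := congrArg (Subtype.val) (FF_mul_FF I J)
  rw [coe_mul', apply_ite (Subtype.val)] at this
  exact this

lemma F_sum : ∑ I : Finset S, F S I = 1 := by
  have := congrArg (Subtype.val) (FF_sum (S := S))
  rw [coe_sum'] at this
  exact this

lemma eX_eq_sum_F (s : S) : ∑ I : Finset S, (if s ∈ I then F S I else 0) = eX S s := by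
  have := congrArg (Subtype.val) (e_eq_sum s)
  rw [coe_sum'] at this
  simp only [apply_ite (Subtype.val)] at this
  exact this


variable (S)

noncomputable def V (I : Finset S) : PathAlg S :=
  RingQuot.mkAlgHom ℤ (PathRel S) (ι ℤ (Sum.inl I))

noncomputable def A (a : QEdge S) : PathAlg S :=
  RingQuot.mkAlgHom ℤ (PathRel S) (ι ℤ (Sum.inr a))

variable {S}

lemma V_mul_V (I J : Finset S) : V S I * V S J = if I = J then V S I else 0 := by
  have := RingQuot.mkAlgHom_rel ℤ (PathRel.vtx (S := S) I J)
  simpa [V, map_mul, apply_ite (RingQuot.mkAlgHom ℤ (PathRel S))] using this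

lemma V_sum : ∑ I : Finset S, V S I = 1 := by
  have := RingQuot.mkAlgHom_rel ℤ (PathRel.sum (S := S))
  simpa [V, map_sum] using this

lemma A_sand (a : QEdge S) : V S a.1 * A S a * V S a.2.1 = A S a := by
  have := RingQuot.mkAlgHom_rel ℤ (PathRel.edge (S := S) a)
  simpa [V, A, map_mul] using this

lemma V_mul_A (I : Finset S) (a : QEdge S) :
    V S I * A S a = if I = a.1 then A S a else 0 := by
  calc V S I * A S a = V S I * (V S a.1 * A S a * V S a.2.1) := by rw [A_sand]
    _ = (V S I * V S a.1) * A S a * V S a.2.1 := by rw [mul_assoc, mul_assoc, mul_assoc]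
    _ = _ := by
        rw [V_mul_V]
        split_ifs with h
        · subst h; exact A_sand a
        · rw [zero_mul, zero_mul]

lemma A_mul_V (a : QEdge S) (J : Finset S) :
    A S a * V S J = if J = a.2.1 then A S a else 0 := by
  calc A S a * V S J = (V S a.1 * A S a * V S a.2.1) * V S J := by rw [A_sand]
    _ = V S a.1 * A S a * (V S a.2.1 * V S J) := by rw [mul_assoc]
    _ = _ := by
        rw [V_mul_V]
        split_ifs with h h' h'
        · subst h'; exact A_sand a
        · exact absurd h.symm h'
        · exact absurd h'.symm h
        · rw [mul_zero]

variable (S)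

/-- The diagonal subring of the path algebra. -/
noncomputable def D : (Finset S → ℤ) →+* PathAlg S where
  toFun c := ∑ K : Finset S, c K • V S K
  map_one' := by simp [V_sum]
  map_mul' c d := by
    rw [Finset.sum_mul_sum]
    simp only [smul_mul_smul_comm, V_mul_V, smul_ite, smul_zero, zsmul_zero, Finset.sum_ite_eq', Finset.sum_ite_eq,
      Finset.mem_univ, if_true, Pi.mul_apply]
  map_zero' := by simp
  map_add' c d := by
    simp [add_smul, Finset.sum_add_distrib, add_mul]


variable {S}

lemma D_apply (c : Finset S → ℤ) : D S c = ∑ K : Finset S, c K • V S K := rfl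

lemma D_mul_A (c : Finset S → ℤ) (a : QEdge S) : D S c * A S a = c a.1 • A S a := by
  rw [D_apply, Finset.sum_mul]
  have h : ∀ K : Finset S, (c K • V S K) * A S a = if K = a.1 then c K • A S a else 0 :=
    fun K => by rw [smul_mul_assoc, V_mul_A, smul_ite, zsmul_zero]
  rw [Finset.sum_congr rfl fun K _ => h K, Finset.sum_ite_eq', if_pos (Finset.mem_univ _)]

lemma A_mul_D (a : QEdge S) (c : Finset S → ℤ) : A S a * D S c = c a.2.1 • A S a := by
  rw [D_apply, Finset.mul_sum]
  have h : ∀ K : Finset S, A S a * (c K • V S K) = if K = a.2.1 then c K • A S a else 0 :=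
    fun K => by rw [mul_smul_comm, A_mul_V, smul_ite, zsmul_zero]
  rw [Finset.sum_congr rfl fun K _ => h K, Finset.sum_ite_eq', if_pos (Finset.mem_univ _)]

variable (S)

def es (s : S) : Finset S → ℤ := fun K => if s ∈ K then 1 else 0

noncomputable def XP (s : S) : PathAlg S :=
  ∑ a : QEdge S, if (a.2.2 : S) = s then A S a else 0

noncomputable def phiGen : S ⊕ S → PathAlg S :=
  Sum.elim (fun s => D S (es S s)) (fun s => XP S s)

variable {S}

lemma s_mem_fst (a : QEdge S) : (a.2.2 : S) ∈ a.1 := (Finset.mem_sdiff.mp a.2.2.2).1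

lemma s_not_mem_snd (a : QEdge S) : (a.2.2 : S) ∉ a.2.1 := (Finset.mem_sdiff.mp a.2.2.2).2

lemma phiRel : ∀ ⦃x y⦄, XiRel S x y →
    FreeAlgebra.lift ℤ (phiGen S) x = FreeAlgebra.lift ℤ (phiGen S) y := by
  rintro x y h
  cases h with
  | idem s =>
    rw [map_mul, FreeAlgebra.lift_ι_apply]
    show D S (es S s) * D S (es S s) = D S (es S s)
    rw [← map_mul]
    congr 1
    funext K
    simp only [Pi.mul_apply, es]
    split_ifs <;> ring
  | comm s t =>
    rw [map_mul, map_mul, FreeAlgebra.lift_ι_apply, FreeAlgebra.lift_ι_apply]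
    show D S (es S s) * D S (es S t) = D S (es S t) * D S (es S s)
    rw [← map_mul, ← map_mul, mul_comm]
  | ex s =>
    rw [map_mul, FreeAlgebra.lift_ι_apply, FreeAlgebra.lift_ι_apply]
    show D S (es S s) * XP S s = XP S s
    rw [XP, Finset.mul_sum]
    refine Finset.sum_congr rfl fun a _ => ?_
    rw [mul_ite, mul_zero, D_mul_A]
    split_ifs with h
    · rw [show es S s a.1 = 1 from if_pos (h ▸ s_mem_fst a), one_smul]
    · rfl
  | xe s =>
    rw [map_mul, FreeAlgebra.lift_ι_apply, FreeAlgebra.lift_ι_apply, map_zero]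
    show XP S s * D S (es S s) = 0
    rw [XP, Finset.sum_mul]
    refine Finset.sum_eq_zero fun a _ => ?_
    rw [ite_mul, zero_mul, A_mul_D]
    split_ifs with h
    · rw [show es S s a.2.1 = 0 from if_neg (h ▸ s_not_mem_snd a), zero_zsmul]
    · rfl

variable (S)

noncomputable def Phi : Xi S →ₐ[ℤ] PathAlg S :=
  RingQuot.liftAlgHom ℤ ⟨FreeAlgebra.lift ℤ (phiGen S), phiRel⟩

variable {S}

lemma Phi_e (s : S) : Phi S (eX S s) = D S (es S s) := by
  rw [eX, Phi, RingQuot.liftAlgHom_mkAlgHom_apply, FreeAlgebra.lift_ι_apply]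
  rfl

lemma Phi_x (s : S) : Phi S (xX S s) = XP S s := by
  rw [xX, Phi, RingQuot.liftAlgHom_mkAlgHom_apply, FreeAlgebra.lift_ι_apply]
  rfl


variable (S)

noncomputable def psiGen : Finset S ⊕ QEdge S → Xi S :=
  Sum.elim (fun I => F S I) (fun a => F S a.1 * xX S (a.2.2 : S) * F S a.2.1)

variable {S}

lemma F_idem (I : Finset S) : F S I * F S I = F S I := by
  simpa using F_mul_F I I

lemma sandwich {R : Type*} [Ring R] (u v w : R) (hu : u * u = u) (hw : w * w = w) :
    u * (u * v * w) * w = u * v * w := by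
  rw [show u * (u * v * w) * w = (u * u) * v * (w * w) by noncomm_ring, hu, hw]

lemma psiRel : ∀ ⦃x y⦄, PathRel S x y →
    FreeAlgebra.lift ℤ (psiGen S) x = FreeAlgebra.lift ℤ (psiGen S) y := by
  rintro x y h
  cases h with
  | vtx I J =>
    rw [map_mul, FreeAlgebra.lift_ι_apply, FreeAlgebra.lift_ι_apply,
      apply_ite (FreeAlgebra.lift ℤ (psiGen S)), map_zero, FreeAlgebra.lift_ι_apply]
    show F S I * F S J = if I = J then F S I else 0
    exact F_mul_F I J
  | sum =>
    rw [map_sum, map_one]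
    calc ∑ I : Finset S, FreeAlgebra.lift ℤ (psiGen S) (ι ℤ (Sum.inl I))
        = ∑ I : Finset S, F S I :=
          Finset.sum_congr rfl fun I _ => by rw [FreeAlgebra.lift_ι_apply]; rfl
      _ = 1 := F_sum
  | edge a =>
    rw [map_mul, map_mul, FreeAlgebra.lift_ι_apply, FreeAlgebra.lift_ι_apply,
      FreeAlgebra.lift_ι_apply]
    show F S a.1 * (F S a.1 * xX S (a.2.2 : S) * F S a.2.1) * F S a.2.1
        = F S a.1 * xX S (a.2.2 : S) * F S a.2.1
    exact sandwich _ _ _ (F_idem a.1) (F_idem a.2.1)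

variable (S)

noncomputable def Psi : PathAlg S →ₐ[ℤ] Xi S :=
  RingQuot.liftAlgHom ℤ ⟨FreeAlgebra.lift ℤ (psiGen S), psiRel⟩

variable {S}

lemma Psi_V (I : Finset S) : Psi S (V S I) = F S I := by
  rw [V, Psi, RingQuot.liftAlgHom_mkAlgHom_apply, FreeAlgebra.lift_ι_apply]
  rfl

lemma Psi_A (a : QEdge S) :
    Psi S (A S a) = F S a.1 * xX S (a.2.2 : S) * F S a.2.1 := by
  rw [A, Psi, RingQuot.liftAlgHom_mkAlgHom_apply, FreeAlgebra.lift_ι_apply]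
  rfl


lemma Phi_coe_prod_e (T : Finset S) :
    Phi S ((↑(∏ t ∈ T, ee S t) : Xi S)) = D S (fun K => if T ⊆ K then 1 else 0) := by
  induction T using Finset.induction_on with
  | empty =>
    rw [Finset.prod_empty, coe_one', map_one]
    have : (fun K : Finset S => if ∅ ⊆ K then (1:ℤ) else 0) = 1 := by
      funext K; simp
    rw [this, map_one]
  | @insert a T ha ih =>
    rw [Finset.prod_insert ha, coe_mul', map_mul, ih,
      show ((ee S a : Csub S) : Xi S) = eX S a from rfl, Phi_e, ← map_mul]
    congr 1
    funext K
    simp only [Pi.mul_apply, es]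
    by_cases h1 : a ∈ K <;> by_cases h2 : T ⊆ K <;>
      simp [Finset.insert_subset_iff, h1, h2]

lemma Phi_coe_prod_ne (T : Finset S) :
    Phi S ((↑(∏ t ∈ T, (1 - ee S t)) : Xi S))
      = D S (fun K => if ∀ t ∈ T, t ∉ K then 1 else 0) := by
  induction T using Finset.induction_on with
  | empty =>
    rw [Finset.prod_empty, coe_one', map_one]
    have : (fun K : Finset S => if ∀ t ∈ (∅ : Finset S), t ∉ K then (1:ℤ) else 0) = 1 := by
      funext K; simp
    rw [this, map_one]
  | @insert a T ha ih =>
    rw [Finset.prod_insert ha, coe_mul', map_mul, ih,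
      show ((1 - ee S a : Csub S) : Xi S) = 1 - eX S a from rfl, map_sub, map_one, Phi_e]
    have : (1 : PathAlg S) - D S (es S a) = D S (1 - es S a) := by
      rw [map_sub, map_one]
    rw [this, ← map_mul]
    congr 1
    funext K
    simp only [Pi.mul_apply, Pi.sub_apply, Pi.one_apply, es]
    by_cases h1 : a ∈ K <;> by_cases h2 : ∀ t ∈ T, t ∉ K <;>
      simp [Finset.forall_mem_insert, h1, h2]

lemma Phi_F (I : Finset S) : Phi S (F S I) = V S I := by
  have hF : F S I = (↑(∏ t ∈ I, ee S t) : Xi S) * (↑(∏ t ∈ Iᶜ, (1 - ee S t)) : Xi S) := by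
    rw [← coe_mul']; rfl
  rw [hF, map_mul, Phi_coe_prod_e, Phi_coe_prod_ne, ← map_mul]
  have hptw : (fun K => if I ⊆ K then (1:ℤ) else 0) * (fun K => if ∀ t ∈ Iᶜ, t ∉ K then 1 else 0)
      = fun K => if K = I then (1:ℤ) else 0 := by
    funext K
    simp only [Pi.mul_apply]
    rcases eq_or_ne K I with rfl | h
    · rw [if_pos rfl, if_pos (Finset.Subset.refl _),
        if_pos (fun t ht => Finset.mem_compl.mp ht), one_mul]
    · rw [if_neg h]
      by_cases h1 : I ⊆ K
      · have h2 : ¬ ∀ t ∈ Iᶜ, t ∉ K := by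
          intro hb
          exact h (Finset.Subset.antisymm (fun t ht => by
            by_contra ht'
            exact hb t (Finset.mem_compl.mpr ht') ht) h1)
        rw [if_neg h2, mul_zero]
      · rw [if_neg h1, zero_mul]
  rw [hptw, D_apply, Finset.sum_congr rfl
    (fun K _ => by rw [ite_smul, one_smul, zero_zsmul]), Finset.sum_ite_eq',
    if_pos (Finset.mem_univ _)]

lemma QEdge.ext' {a b : QEdge S} (h1 : a.1 = b.1) (h2 : a.2.1 = b.2.1)
    (h3 : (a.2.2 : S) = (b.2.2 : S)) : a = b := by
  rcases a with ⟨I, J, t⟩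
  rcases b with ⟨I', J', t'⟩
  dsimp at h1 h2 h3
  subst h1; subst h2
  rw [Subtype.ext h3]

lemma V_XP_V (a : QEdge S) : V S a.1 * XP S (a.2.2 : S) * V S a.2.1 = A S a := by
  rw [XP, Finset.mul_sum, Finset.sum_mul, Finset.sum_eq_single a]
  · rw [if_pos rfl, A_sand]
  · intro b _ hb
    rw [mul_ite, mul_zero, ite_mul, zero_mul]
    split_ifs with h1
    · rw [V_mul_A]
      split_ifs with h2
      · rw [A_mul_V]
        split_ifs with h3
        · exact absurd (QEdge.ext' h2 h3 h1.symm) (fun h => hb h.symm)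
        · rfl
      · rw [zero_mul]
    · rfl
  · intro h; exact absurd (Finset.mem_univ a) h

lemma comp1 : (Phi S).comp (Psi S) = AlgHom.id ℤ (PathAlg S) := by
  apply RingQuot.ringQuot_ext'
  apply FreeAlgebra.hom_ext
  funext g
  cases g with
  | inl I =>
    show Phi S (Psi S (V S I)) = V S I
    rw [Psi_V, Phi_F]
  | inr a =>
    show Phi S (Psi S (A S a)) = A S a
    rw [Psi_A, map_mul, map_mul, Phi_F, Phi_F, Phi_x, V_XP_V]


lemma Psi_D (c : Finset S → ℤ) : Psi S (D S c) = ∑ K : Finset S, c K • F S K := by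
  rw [D_apply, map_sum]
  exact Finset.sum_congr rfl fun K _ => by rw [map_zsmul, Psi_V]

lemma Psi_D_es (s : S) : Psi S (D S (es S s)) = eX S s := by
  rw [Psi_D, ← eX_eq_sum_F s]
  refine Finset.sum_congr rfl fun K _ => ?_
  rw [es]
  split_ifs with h
  · rw [one_smul]
  · rw [zero_zsmul]

lemma sum_subtype_ite {T : Finset S} {s : S} (c : Xi S) :
    ∑ t : {u // u ∈ T}, (if (t : S) = s then c else 0) = if s ∈ T then c else 0 := by
  rw [← Finset.sum_subtype T (fun x => Iff.rfl) (fun x => if x = s then c else 0),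
    Finset.sum_ite_eq' T s (fun _ => c)]

lemma Psi_XP (s : S) : Psi S (XP S s) = xX S s := by
  rw [XP, map_sum]
  have h1 : ∀ a : QEdge S, Psi S (if (a.2.2 : S) = s then A S a else 0)
      = if (a.2.2 : S) = s then F S a.1 * xX S s * F S a.2.1 else 0 := by
    intro a
    split_ifs with h
    · rw [Psi_A, h]
    · rw [map_zero]
  rw [Finset.sum_congr rfl fun a _ => h1 a, ← Finset.univ_sigma_univ, Finset.sum_sigma]
  have h2 : ∀ I : Finset S, ∑ p : Σ J : Finset S, {u // u ∈ I \ J},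
      (if (p.2 : S) = s then F S I * xX S s * F S p.1 else 0)
      = ∑ J : Finset S, if s ∈ I \ J then F S I * xX S s * F S J else 0 := by
    intro I
    rw [← Finset.univ_sigma_univ, Finset.sum_sigma]
    refine Finset.sum_congr rfl fun J _ => ?_
    dsimp only
    exact sum_subtype_ite _
  rw [Finset.sum_congr rfl fun I _ => h2 I]
  have h3 : ∀ I J : Finset S, (if s ∈ I \ J then F S I * xX S s * F S J else 0)
      = (if s ∈ I then F S I else 0) * xX S s * (if s ∉ J then F S J else 0) := by
    intro I J
    by_cases hi : s ∈ I <;> by_cases hj : s ∈ J <;>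
      simp [Finset.mem_sdiff, hi, hj]
  rw [Finset.sum_congr rfl fun I _ => Finset.sum_congr rfl fun J _ => h3 I J]
  simp only [← Finset.mul_sum]
  rw [← Finset.sum_mul, ← Finset.sum_mul, eX_eq_sum_F]
  have h4 : ∑ J : Finset S, (if s ∉ J then F S J else 0) = 1 - eX S s := by
    rw [← F_sum (S := S), ← eX_eq_sum_F s, ← Finset.sum_sub_distrib]
    refine Finset.sum_congr rfl fun J _ => ?_
    by_cases hj : s ∈ J <;> simp [hj]
  rw [h4, e_x, mul_sub, mul_one, x_e, sub_zero]

lemma comp2 : (Psi S).comp (Phi S) = AlgHom.id ℤ (Xi S) := by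
  apply RingQuot.ringQuot_ext'
  apply FreeAlgebra.hom_ext
  funext g
  cases g with
  | inl s =>
    show Psi S (Phi S (eX S s)) = eX S s
    rw [Phi_e, Psi_D_es]
  | inr s =>
    show Psi S (Phi S (xX S s)) = xX S s
    rw [Phi_x, Psi_XP]

noncomputable def theEquiv : Xi S ≃ₐ[ℤ] PathAlg S :=
  AlgEquiv.ofAlgHom (Phi S) (Psi S) comp1 comp2

end XiPath

/-- Ξ is isomorphic to the path algebra ℤQ. -/
theorem xi_iso_pathAlg (S : Type) [Fintype S] [DecidableEq S] :
    Nonempty (Xi S ≃+* PathAlg S) :=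
  ⟨(XiPath.theEquiv (S := S)).toRingEquiv⟩
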